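/- (Lower bound on Esscher-transformed probabilities via Cauchy–Schwarz) Let Z be a real random variable with e^{Z}, e^{−Z} ∈ L¹ and A an event. Then E[1_A e^{Z}]/E[e^{Z}] ≥ P(A)² / (E[e^{Z}] E[e^{−Z}]). In particular, combined with the bound ‖f+a‖_ω ≤ M for suitable a, one gets for Z = γF(x,h,W₀)+f(G(x,W₀)): Q̄_{(x,f,h)}(A) ≥ E[1_{G(x,W₀)∈A}]² / (e^{2[(Mb₁−γb₂)ω(x)+M]} E[e^{Ma₁(W₀)−γa₂(W₀)}]²). -/

import Mathlib

open MeasureTheory Real Set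

lemma cs_aux {Ω : Type*} [MeasurableSpace Ω] (P : Measure Ω) [IsFiniteMeasure P]
    (Z : Ω → ℝ)
    (h1 : Integrable (fun ω => Real.exp (Z ω)) P)
    (h2 : Integrable (fun ω => Real.exp (-Z ω)) P) (s : Set Ω) :
    (P s).toReal ^ 2 ≤ (∫ ω in s, Real.exp (Z ω) ∂P) * ∫ ω, Real.exp (-Z ω) ∂P := by
  set μ := P.restrict s with hμ
  set u : Ω → ℝ := fun ω => Real.exp (Z ω / 2) with hu
  set v : Ω → ℝ := fun ω => Real.exp (-Z ω / 2) with hv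
  have hu_eq : u = fun ω => Real.sqrt (Real.exp (Z ω)) := by
    funext ω; simp [hu, Real.exp_half]
  have hv_eq : v = fun ω => Real.sqrt (Real.exp (-Z ω)) := by
    funext ω; simp [hv, Real.exp_half]
  have hum : AEStronglyMeasurable u μ := by
    rw [hu_eq]
    exact (Real.continuous_sqrt.comp_aestronglyMeasurable
      (h1.aestronglyMeasurable.restrict))
  have hvm : AEStronglyMeasurable v μ := by
    rw [hv_eq]
    exact (Real.continuous_sqrt.comp_aestronglyMeasurable
      (h2.aestronglyMeasurable.restrict))
  have hu_sq : ∀ ω, u ω ^ 2 = Real.exp (Z ω) := by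
    intro ω; rw [hu, ← Real.exp_nat_mul]; norm_num; ring_nf
  have hv_sq : ∀ ω, v ω ^ 2 = Real.exp (-Z ω) := by
    intro ω; rw [hv, ← Real.exp_nat_mul]; norm_num; ring_nf
  have huL : MemLp u (ENNReal.ofReal 2) μ := by
    rw [show (ENNReal.ofReal 2) = 2 by norm_num]
    rw [memLp_two_iff_integrable_sq hum]
    simpa only [hu_sq] using h1.restrict (s := s)
  have hvL : MemLp v (ENNReal.ofReal 2) μ := by
    rw [show (ENNReal.ofReal 2) = 2 by norm_num]
    rw [memLp_two_iff_integrable_sq hvm]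
    simpa only [hv_sq] using h2.restrict (s := s)
  have hpq : Real.HolderConjugate 2 2 := by rw [Real.holderConjugate_iff]; norm_num
  have hCS := integral_mul_le_Lp_mul_Lq_of_nonneg hpq
    (Filter.Eventually.of_forall fun ω => (Real.exp_pos _).le)
    (Filter.Eventually.of_forall fun ω => (Real.exp_pos _).le) huL hvL
  have huv : ∀ ω, u ω * v ω = 1 := by
    intro ω; rw [hu, hv, ← Real.exp_add]; simp [neg_div]
  have hleft : ∫ ω, u ω * v ω ∂μ = (P s).toReal := by
    simp only [huv]
    simp [hμ, Measure.restrict_apply_univ, Measure.real]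
  have hu_rsq : ∀ ω, u ω ^ (2 : ℝ) = Real.exp (Z ω) := by
    intro ω
    rw [show ((2 : ℝ)) = ((2 : ℕ) : ℝ) by norm_num, Real.rpow_natCast]
    exact hu_sq ω
  have hv_rsq : ∀ ω, v ω ^ (2 : ℝ) = Real.exp (-Z ω) := by
    intro ω
    rw [show ((2 : ℝ)) = ((2 : ℕ) : ℝ) by norm_num, Real.rpow_natCast]
    exact hv_sq ω
  rw [hleft] at hCS
  simp only [hu, hv] at hu_rsq hv_rsq
  simp only [hu_rsq, hv_rsq] at hCS
  set A := ∫ ω, Real.exp (Z ω) ∂μ with hA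
  set B := ∫ ω, Real.exp (-Z ω) ∂μ with hB
  have hA0 : 0 ≤ A := integral_nonneg fun ω => (Real.exp_pos _).le
  have hB0 : 0 ≤ B := integral_nonneg fun ω => (Real.exp_pos _).le
  have hsq : (A ^ ((1:ℝ)/2) * B ^ ((1:ℝ)/2)) ^ 2 = A * B := by
    rw [mul_pow, ← Real.rpow_natCast (A ^ ((1:ℝ)/2)) 2, ← Real.rpow_natCast (B ^ ((1:ℝ)/2)) 2,
      ← Real.rpow_mul hA0, ← Real.rpow_mul hB0]
    norm_num
  have h1' : (P s).toReal ^ 2 ≤ A * B := by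
    rw [← hsq]
    have h0 : (0:ℝ) ≤ (P s).toReal := ENNReal.toReal_nonneg
    exact pow_le_pow_left₀ h0 hCS 2
  refine h1'.trans ?_
  have hBle : B ≤ ∫ ω, Real.exp (-Z ω) ∂P :=
    setIntegral_le_integral h2 (Filter.Eventually.of_forall fun ω => (Real.exp_pos _).le)
  exact mul_le_mul_of_nonneg_left hBle hA0

theorem stmt18 {Ω : Type*} [MeasurableSpace Ω] (P : Measure Ω)
    [IsProbabilityMeasure P] :
    -- Generic Cauchy–Schwarz lower bound for Esscher-transformed probabilities
    (∀ (Z : Ω → ℝ), Measurable Z →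
      Integrable (fun ω => Real.exp (Z ω)) P →
      Integrable (fun ω => Real.exp (-Z ω)) P →
      ∀ A : Set Ω, MeasurableSet A →
        (P A).toReal ^ 2 /
            ((∫ ω, Real.exp (Z ω) ∂P) * ∫ ω, Real.exp (-Z ω) ∂P) ≤
          (∫ ω in A, Real.exp (Z ω) ∂P) / ∫ ω, Real.exp (Z ω) ∂P) ∧
    -- Particular case Z = γF(x,h,W₀) + f(G(x,W₀)) under (A.4)
    (∀ (k m d : ℕ) (γ M b₁ b₂ a : ℝ)
        (ω : (Fin k → ℝ) → ℝ)
        (G : (Fin k → ℝ) → (Fin d → ℝ) → Fin k → ℝ)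
        (F : (Fin k → ℝ) → (Fin m → ℝ) → (Fin d → ℝ) → ℝ)
        (a₁ a₂ : (Fin d → ℝ) → ℝ)
        (f : (Fin k → ℝ) → ℝ) (x : Fin k → ℝ) (h : Fin m → ℝ)
        (W₀ : Ω → Fin d → ℝ), Measurable W₀ → γ < 0 →
      (∀ z, 0 ≤ ω z) →
      (∀ z w, ω (G z w) ≤ a₁ w + b₁ * ω z) →
      (∀ z h' w, |F z h' w| ≤ a₂ w + b₂ * ω z) →
      (∀ z, |f z + a| ≤ M * (1 + ω z)) →
      Integrable (fun ω' =>
        Real.exp (γ * F x h (W₀ ω') + f (G x (W₀ ω')))) P →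
      Integrable (fun ω' =>
        Real.exp (-(γ * F x h (W₀ ω') + f (G x (W₀ ω'))))) P →
      Integrable (fun ω' =>
        Real.exp (M * a₁ (W₀ ω') - γ * a₂ (W₀ ω'))) P →
      ∀ A : Set (Fin k → ℝ), MeasurableSet A →
        (P {ω' | G x (W₀ ω') ∈ A}).toReal ^ 2 /
            (Real.exp (2 * ((M * b₁ - γ * b₂) * ω x + M)) *
              (∫ ω', Real.exp (M * a₁ (W₀ ω') - γ * a₂ (W₀ ω')) ∂P) ^ 2) ≤
          (∫ ω' in {ω' | G x (W₀ ω') ∈ A},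
              Real.exp (γ * F x h (W₀ ω') + f (G x (W₀ ω'))) ∂P) /
            ∫ ω', Real.exp (γ * F x h (W₀ ω') + f (G x (W₀ ω'))) ∂P) := by
  have main : ∀ (Z : Ω → ℝ),
      Integrable (fun ω => Real.exp (Z ω)) P →
      Integrable (fun ω => Real.exp (-Z ω)) P →
      ∀ A : Set Ω,
        (P A).toReal ^ 2 /
            ((∫ ω, Real.exp (Z ω) ∂P) * ∫ ω, Real.exp (-Z ω) ∂P) ≤
          (∫ ω in A, Real.exp (Z ω) ∂P) / ∫ ω, Real.exp (Z ω) ∂P := by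
    intro Z h1 h2 A
    have hE1 : 0 < ∫ ω, Real.exp (Z ω) ∂P := integral_exp_pos h1
    have hE2 : 0 < ∫ ω, Real.exp (-Z ω) ∂P := integral_exp_pos h2
    have hcs := cs_aux P Z h1 h2 A
    rw [div_le_div_iff₀ (mul_pos hE1 hE2) hE1]
    nlinarith [hE1.le, hE2.le]
  constructor
  · intro Z _ h1 h2 A _
    exact main Z h1 h2 A
  · intro k m d γ M b₁ b₂ a ω G F a₁ a₂ f x h W₀ _ hγ hω hG hF hfa hZ1 hZ2 hI A _
    set Z : Ω → ℝ := fun ω' => γ * F x h (W₀ ω') + f (G x (W₀ ω')) with hZdef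
    set C : ℝ := (M * b₁ - γ * b₂) * ω x + M with hC
    set I : ℝ := ∫ ω', Real.exp (M * a₁ (W₀ ω') - γ * a₂ (W₀ ω')) ∂P with hIdef
    have hM : 0 ≤ M := by
      have h1 := hfa x
      have h2 := abs_nonneg (f x + a)
      nlinarith [hω x]
    -- pointwise bound: |Z ω' + a| ≤ M * a₁(W₀ ω') - γ * a₂(W₀ ω') + C
    have key : ∀ ω', |Z ω' + a| ≤ M * a₁ (W₀ ω') - γ * a₂ (W₀ ω') + C := by
      intro ω'
      set w := W₀ ω'
      have hF' := abs_le.1 (hF x h w)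
      have hfa' := abs_le.1 (hfa (G x w))
      have hGw := hG x w
      have hMω : M * ω (G x w) ≤ M * (a₁ w + b₁ * ω x) :=
        mul_le_mul_of_nonneg_left hGw hM
      rw [abs_le]
      constructor <;> · simp only [hZdef, hC]; nlinarith [hω (G x w)]
    have hbound1 : ∀ ω', Real.exp (Z ω') ≤
        Real.exp (C - a) * Real.exp (M * a₁ (W₀ ω') - γ * a₂ (W₀ ω')) := by
      intro ω'
      rw [← Real.exp_add]
      apply Real.exp_le_exp.2
      have := (abs_le.1 (key ω')).2
      linarith
    have hbound2 : ∀ ω', Real.exp (-Z ω') ≤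
        Real.exp (C + a) * Real.exp (M * a₁ (W₀ ω') - γ * a₂ (W₀ ω')) := by
      intro ω'
      rw [← Real.exp_add]
      apply Real.exp_le_exp.2
      have := (abs_le.1 (key ω')).1
      linarith
    have hE1 : 0 < ∫ ω', Real.exp (Z ω') ∂P := integral_exp_pos hZ1
    have hE2 : 0 < ∫ ω', Real.exp (-Z ω') ∂P := integral_exp_pos hZ2
    have hle1 : ∫ ω', Real.exp (Z ω') ∂P ≤ Real.exp (C - a) * I :=
      (integral_mono hZ1 (hI.const_mul _) hbound1).trans_eq (by rw [integral_const_mul])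
    have hle2 : ∫ ω', Real.exp (-Z ω') ∂P ≤ Real.exp (C + a) * I :=
      (integral_mono hZ2 (hI.const_mul _) hbound2).trans_eq (by rw [integral_const_mul])
    have hprod : (∫ ω', Real.exp (Z ω') ∂P) * ∫ ω', Real.exp (-Z ω') ∂P ≤
        Real.exp (2 * C) * I ^ 2 := by
      have hmul : (∫ ω', Real.exp (Z ω') ∂P) * ∫ ω', Real.exp (-Z ω') ∂P ≤
          (Real.exp (C - a) * I) * (Real.exp (C + a) * I) :=
        mul_le_mul hle1 hle2 hE2.le (by positivity)
      refine hmul.trans_eq ?_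
      have : Real.exp (C - a) * Real.exp (C + a) = Real.exp (2 * C) := by
        rw [← Real.exp_add]; congr 1; ring
      nlinarith [this]
    calc (P {ω' | G x (W₀ ω') ∈ A}).toReal ^ 2 / (Real.exp (2 * C) * I ^ 2)
        ≤ (P {ω' | G x (W₀ ω') ∈ A}).toReal ^ 2 /
            ((∫ ω', Real.exp (Z ω') ∂P) * ∫ ω', Real.exp (-Z ω') ∂P) := by
          apply div_le_div_of_nonneg_left (by positivity) (mul_pos hE1 hE2) hprod
      _ ≤ _ := main Z hZ1 hZ2 _
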